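/- Let M be a free abelian group of finite rank, V and W subgroups of M, and φ : V → W a group isomorphism. For an element x of M, the following are equivalent: (i) there exists a positive integer p such that for every k ∈ ℕ the k-th iterate of φ is defined at p·x (i.e. p·x ∈ V_k where V_k = { v ∈ V : φ^j(v) ∈ V for all 0 ≤ j < k }); (ii) there exists a ℚ-subspace D_x of D_φ containing the image of x, with φ̃(D_x) = D_x, such that the minimal polynomial of the restriction of φ̃ to D_x is a monic polynomial with integer coefficients. -/

import Mathlib

/-!
Setting: `M = ℤ^n` is a free abelian group of finite rank, `V, W` are subgroups of `M`,
and `φ : V ≃+ W` is a group isomorphism.  Inside `M ⊗ ℚ = ℚ^n`, a subgroup `U` of `M`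
is identified with the `ℚ`-subspace `U ⊗ ℚ` spanned by its image, and `φ_ℚ` denotes the
unique `ℚ`-linear extension of `φ` to `V ⊗ ℚ`.
-/

/-- The canonical embedding of `ℤ^n` into `ℚ^n` (i.e. `M → M ⊗ ℚ`). -/
def embQ (n : ℕ) (x : Fin n → ℤ) : Fin n → ℚ := fun i => (x i : ℚ)

/-- `U ⊗ ℚ`, the `ℚ`-subspace of `ℚ^n` spanned by the image of a subgroup `U` of `ℤ^n`. -/
def qSpan (n : ℕ) (U : AddSubgroup (Fin n → ℤ)) : Submodule ℚ (Fin n → ℚ) :=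
  Submodule.span ℚ (embQ n '' (U : Set (Fin n → ℤ)))

/-- `RelQ V W φ x y` expresses that `x ∈ V ⊗ ℚ` and `φ_ℚ (x) = y`, where `φ_ℚ` is the
unique `ℚ`-linear extension of `φ : V ≃+ W`: there is a nonzero integer `p` clearing the
denominators of `x`, with `p • x ∈ V` and `φ (p • x) = p • y`. -/
def RelQ {n : ℕ} (V W : AddSubgroup (Fin n → ℤ)) (φ : V ≃+ W)
    (x y : Fin n → ℚ) : Prop :=
  ∃ p : ℤ, p ≠ 0 ∧ ∃ v : V, embQ n (v : Fin n → ℤ) = p • x ∧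
    embQ n ((φ v : W) : Fin n → ℤ) = p • y

/-- `D_φ`: the set of `x ∈ (V ∩ W) ⊗ ℚ` admitting a full backward orbit
`(x_k)_{k ≥ 0}` under `φ_ℚ` inside `(V ∩ W) ⊗ ℚ`, i.e. `x_0 = x` and
`φ_ℚ (x_{k+1}) = x_k` for all `k`. -/
def DSet {n : ℕ} (V W : AddSubgroup (Fin n → ℤ)) (φ : V ≃+ W) : Set (Fin n → ℚ) :=
  {x | ∃ xs : ℕ → (Fin n → ℚ), xs 0 = x ∧ (∀ k, xs k ∈ qSpan n (V ⊓ W)) ∧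
      ∀ k, RelQ V W φ (xs (k + 1)) (xs k)}


/-- `IntRel V W φ v w`: `v ∈ V` and `φ (v) = w` (as elements of `M = ℤ^n`). -/
def IntRel {n : ℕ} (V W : AddSubgroup (Fin n → ℤ)) (φ : V ≃+ W)
    (v w : Fin n → ℤ) : Prop :=
  ∃ hv : v ∈ V, ((φ ⟨v, hv⟩ : W) : Fin n → ℤ) = w

/-- `IntRelIter V W φ k v w`: the `k`-th iterate of `φ` is defined at `v` (i.e. `v ∈ V_k`,
that is `φ^j (v) ∈ V` for all `0 ≤ j < k`) and `φ^k (v) = w`.  In particular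
`V_k = {v | ∃ w, IntRelIter V W φ k v w}` and `W_k = φ^k (V_k) = {w | ∃ v, IntRelIter V W φ k v w}`. -/
def IntRelIter {n : ℕ} (V W : AddSubgroup (Fin n → ℤ)) (φ : V ≃+ W) :
    ℕ → (Fin n → ℤ) → (Fin n → ℤ) → Prop
  | 0, v, w => v = w
  | (k + 1), v, w => ∃ u, IntRel V W φ v u ∧ IntRelIter V W φ k u w



set_option synthInstance.maxHeartbeats 1000000
set_option maxHeartbeats 4000000

namespace Prop71Aux

variable {n : ℕ}

def embL (n : ℕ) : (Fin n → ℤ) →ₗ[ℤ] (Fin n → ℚ) where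
  toFun := embQ n
  map_add' a b := funext fun i => by simp [embQ]
  map_smul' m a := funext fun i => by simp [embQ]

lemma embL_apply (a : Fin n → ℤ) : embL n a = embQ n a := rfl

lemma embQ_injective : Function.Injective (embQ n) := fun a b h =>
  funext fun i => by
    have := congrFun h i
    simpa [embQ] using this

lemma embQ_smul (m : ℤ) (a : Fin n → ℤ) : embQ n (m • a) = m • embQ n a :=
  map_smul (embL n) m a

lemma embQ_zero : embQ n (0 : Fin n → ℤ) = 0 := map_zero (embL n)

lemma zsmul_injQ {N : ℤ} (hN : N ≠ 0) :
    Function.Injective (fun z : Fin n → ℚ => N • z) := by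
  intro a b h
  funext i
  have h' := congrFun h i
  simp only [Pi.smul_apply, zsmul_eq_mul] at h'
  exact mul_left_cancel₀ (by exact_mod_cast hN) h'

lemma clear_denom {A : Type*} [AddCommGroup A] [Module ℚ A] (G : Submodule ℤ A) {y : A}
    (hy : y ∈ Submodule.span ℚ (G : Set A)) : ∃ N : ℤ, N ≠ 0 ∧ N • y ∈ G := by
  induction hy using Submodule.span_induction with
  | mem z hz => exact ⟨1, one_ne_zero, by simpa⟩
  | zero => exact ⟨1, one_ne_zero, by simp⟩
  | add y z _ _ hy hz =>
    obtain ⟨N, hN, hNy⟩ := hy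
    obtain ⟨M, hM, hMz⟩ := hz
    refine ⟨N * M, mul_ne_zero hN hM, ?_⟩
    rw [smul_add]
    exact G.add_mem (by rw [mul_comm, mul_smul]; exact G.smul_mem M hNy)
      (by rw [mul_smul]; exact G.smul_mem N hMz)
  | smul q z _ hz =>
    obtain ⟨N, hN, hNz⟩ := hz
    refine ⟨N * q.den, mul_ne_zero hN (by exact_mod_cast q.den_ne_zero), ?_⟩
    have key : ((N * (q.den : ℤ)) : ℤ) • (q • z) = q.num • (N • z) := by
      rw [← Int.cast_smul_eq_zsmul ℚ (N * (q.den : ℤ)), smul_smul,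
        ← Int.cast_smul_eq_zsmul ℚ q.num, ← Int.cast_smul_eq_zsmul ℚ N, smul_smul]
      congr 1
      have h1 : (q.den : ℚ) * q = (q.num : ℚ) := by
        rw [mul_comm]; exact Rat.mul_den_eq_num q
      push_cast
      calc (N : ℚ) * (q.den : ℚ) * q = (N : ℚ) * ((q.den : ℚ) * q) := by ring
        _ = (N : ℚ) * (q.num : ℚ) := by rw [h1]
        _ = (q.num : ℚ) * (N : ℚ) := by ring
    rw [key]
    exact G.smul_mem _ hNz

lemma mem_qSpan_clear {U : AddSubgroup (Fin n → ℤ)} {y : Fin n → ℚ}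
    (hy : y ∈ qSpan n U) : ∃ N : ℤ, N ≠ 0 ∧ ∃ u ∈ U, embQ n u = N • y := by
  have hset : embQ n '' (U : Set (Fin n → ℤ)) =
      ((Submodule.map (embL n) (AddSubgroup.toIntSubmodule U) : Submodule ℤ (Fin n → ℚ)) :
        Set (Fin n → ℚ)) := by
    ext z
    simp [Submodule.mem_map, embL_apply, Set.mem_image]
  rw [qSpan, hset] at hy
  obtain ⟨N, hN, hmem⟩ := clear_denom _ hy
  obtain ⟨u, hu, hequ⟩ := hmem
  exact ⟨N, hN, u, hu, hequ⟩

section IterLemmas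

variable {V W : AddSubgroup (Fin n → ℤ)} {φ : V ≃+ W}

lemma intRel_zero : IntRel V W φ 0 0 := by
  refine ⟨V.zero_mem, ?_⟩
  have h0 : (⟨0, V.zero_mem⟩ : V) = 0 := rfl
  rw [h0, map_zero]
  rfl

lemma intRel_add {a b a' b' : Fin n → ℤ} (h : IntRel V W φ a b) (h' : IntRel V W φ a' b') :
    IntRel V W φ (a + a') (b + b') := by
  obtain ⟨ha, hb⟩ := h
  obtain ⟨ha', hb'⟩ := h'
  refine ⟨V.add_mem ha ha', ?_⟩
  have : (⟨a + a', V.add_mem ha ha'⟩ : V) = ⟨a, ha⟩ + ⟨a', ha'⟩ := rfl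
  rw [this, map_add]
  rw [← hb, ← hb']
  rfl

lemma intRel_zsmul (m : ℤ) {a b : Fin n → ℤ} (h : IntRel V W φ a b) :
    IntRel V W φ (m • a) (m • b) := by
  obtain ⟨ha, hb⟩ := h
  refine ⟨V.zsmul_mem ha m, ?_⟩
  have h1 : (⟨m • a, V.zsmul_mem ha m⟩ : V) = m • ⟨a, ha⟩ := rfl
  rw [h1]
  have h2 := congrArg (W.subtype) (map_zsmul φ.toAddMonoidHom m (⟨a, ha⟩ : V))
  rw [map_zsmul] at h2
  simpa [hb] using h2

lemma iter_unique : ∀ {k : ℕ} {a b b' : Fin n → ℤ},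
    IntRelIter V W φ k a b → IntRelIter V W φ k a b' → b = b' := by
  intro k
  induction k with
  | zero => intro a b b' h h'; exact h.symm.trans h'
  | succ k ih =>
    rintro a b b' ⟨u, ⟨hu, hru⟩, hb⟩ ⟨u', ⟨hu', hru'⟩, hb'⟩
    have huu : u = u' := by rw [← hru, ← hru']
    subst huu
    exact ih hb hb'

lemma iter_split : ∀ {k : ℕ} {a b : Fin n → ℤ},
    IntRelIter V W φ (k + 1) a b → ∃ u, IntRelIter V W φ k a u ∧ IntRel V W φ u b := by
  intro k
  induction k with
  | zero =>
    rintro a b ⟨u, hrel, hiter⟩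
    have : u = b := hiter
    subst this
    exact ⟨a, rfl, hrel⟩
  | succ k ih =>
    rintro a b ⟨u, hrel, hiter⟩
    obtain ⟨u₂, hiter₂, hrel₂⟩ := ih hiter
    exact ⟨u₂, ⟨u, hrel, hiter₂⟩, hrel₂⟩

end IterLemmas

/-- The forward direction. -/
lemma forward (V W : AddSubgroup (Fin n → ℤ)) (φ : V ≃+ W) (x : Fin n → ℤ)
    (p : ℤ) (hppos : 0 < p)
    (h : ∀ k : ℕ, ∃ w, IntRelIter V W φ k (p • x) w) :
    ∃ (D : Submodule ℚ (Fin n → ℚ)) (e : D ≃ₗ[ℚ] D),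
      (D : Set (Fin n → ℚ)) ⊆ DSet V W φ ∧ embQ n x ∈ D ∧
      (∀ z : D, RelQ V W φ (z : Fin n → ℚ) ((e z : D) : Fin n → ℚ)) ∧
      ∃ P : Polynomial ℤ, P.Monic ∧
        P.map (Int.castRingHom ℚ) = minpoly ℚ (e.toLinearMap : Module.End ℚ D) := by
  classical
  -- extract the forward orbit
  set v : ℕ → (Fin n → ℤ) := fun k => (h k).choose with hvdef
  have hv : ∀ k, IntRelIter V W φ k (p • x) (v k) := fun k => (h k).choose_spec
  have hv0 : v 0 = p • x := (hv 0).symm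
  have hstep : ∀ k, IntRel V W φ (v k) (v (k + 1)) := by
    intro k
    obtain ⟨u, hiter, hrel⟩ := iter_split (hv (k + 1))
    rwa [iter_unique hiter (hv k)] at hrel
  have hvV : ∀ k, v k ∈ V := fun k => (hstep k).choose
  have hφv : ∀ k, ((φ ⟨v k, hvV k⟩ : W) : Fin n → ℤ) = v (k + 1) := fun k =>
    (hstep k).choose_spec
  have hvW : ∀ k, v (k + 1) ∈ W := by
    intro k
    rw [← hφv k]
    exact (φ ⟨v k, hvV k⟩).2
  set y : ℕ → (Fin n → ℚ) := fun k => embQ n (v k) with hydef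
  -- the integral graph submodule
  set Gz : Submodule ℤ ((Fin n → ℤ) × (Fin n → ℤ)) :=
    Submodule.span ℤ (Set.range fun k => (v k, v (k + 1))) with hGz
  have GRel : ∀ c : (Fin n → ℤ) × (Fin n → ℤ), c ∈ Gz → IntRel V W φ c.1 c.2 := by
    intro c hc
    induction hc using Submodule.span_induction with
    | mem z hz =>
      obtain ⟨k, rfl⟩ := hz
      exact ⟨hvV k, hφv k⟩
    | zero => exact intRel_zero
    | add a b _ _ ha hb =>
      have := intRel_add ha hb
      simpa using this
    | smul m a _ ha =>
      have := intRel_zsmul m ha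
      simpa using this
  set embL2 : ((Fin n → ℤ) × (Fin n → ℤ)) →ₗ[ℤ] ((Fin n → ℚ) × (Fin n → ℚ)) :=
    (embL n).prodMap (embL n) with hembL2
  set Gq : Submodule ℤ ((Fin n → ℚ) × (Fin n → ℚ)) := Submodule.map embL2 Gz with hGq
  set Y : ℕ → (Fin n → ℚ) × (Fin n → ℚ) := fun k => (y k, y (k + 1)) with hYdef
  set E : Submodule ℚ ((Fin n → ℚ) × (Fin n → ℚ)) := Submodule.span ℚ (Set.range Y) with hE
  have hYGq : ∀ k, Y k ∈ Gq := by
    intro k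
    exact ⟨(v k, v (k + 1)), Submodule.subset_span ⟨k, rfl⟩, rfl⟩
  have hEGq : E ≤ Submodule.span ℚ (Gq : Set _) := by
    rw [hE, Submodule.span_le]
    rintro _ ⟨k, rfl⟩
    exact Submodule.subset_span (hYGq k)
  have keyW : ∀ w : (Fin n → ℚ) × (Fin n → ℚ), w ∈ E →
      ∃ N : ℤ, N ≠ 0 ∧ ∃ c : (Fin n → ℤ) × (Fin n → ℤ), IntRel V W φ c.1 c.2 ∧
        embQ n c.1 = N • w.1 ∧ embQ n c.2 = N • w.2 := by
    intro w hw
    obtain ⟨N, hN, hmem⟩ := clear_denom Gq (hEGq hw)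
    obtain ⟨c, hcG, hc⟩ := hmem
    refine ⟨N, hN, c, GRel c hcG, ?_, ?_⟩
    · have := congrArg Prod.fst hc
      simpa [hembL2, embL_apply] using this
    · have := congrArg Prod.snd hc
      simpa [hembL2, embL_apply] using this
  set D : Submodule ℚ (Fin n → ℚ) := Submodule.span ℚ (Set.range y) with hD
  set D' : Submodule ℚ (Fin n → ℚ) :=
    Submodule.span ℚ (Set.range fun k => y (k + 1)) with hD'
  set π₁ : E →ₗ[ℚ] (Fin n → ℚ) :=
    (LinearMap.fst ℚ (Fin n → ℚ) (Fin n → ℚ)).comp E.subtype with hπ₁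
  set π₂ : E →ₗ[ℚ] (Fin n → ℚ) :=
    (LinearMap.snd ℚ (Fin n → ℚ) (Fin n → ℚ)).comp E.subtype with hπ₂
  have hπ₁r : LinearMap.range π₁ = D := by
    rw [hπ₁, LinearMap.range_comp, Submodule.range_subtype, hE, Submodule.map_span,
      ← Set.range_comp]
    rfl
  have hπ₂r : LinearMap.range π₂ = D' := by
    rw [hπ₂, LinearMap.range_comp, Submodule.range_subtype, hE, Submodule.map_span,
      ← Set.range_comp]
    rfl
  have hπ₁inj : Function.Injective π₁ := by
    rw [← LinearMap.ker_eq_bot]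
    rw [eq_bot_iff]
    intro w hw
    have hw1 : (w : (Fin n → ℚ) × (Fin n → ℚ)).1 = 0 := hw
    obtain ⟨N, hN, c, ⟨hcV, hcφ⟩, h1, h2⟩ := keyW (w : (Fin n → ℚ) × (Fin n → ℚ)) w.2
    have hc1 : c.1 = 0 := by
      apply embQ_injective
      rw [h1, hw1, smul_zero, embQ_zero]
    have hc2 : c.2 = 0 := by
      rw [← hcφ]
      have : (⟨c.1, hcV⟩ : V) = 0 := Subtype.ext hc1
      rw [this, map_zero]
      rfl
    have hw2 : (w : (Fin n → ℚ) × (Fin n → ℚ)).2 = 0 := by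
      apply zsmul_injQ hN
      show N • _ = N • _
      rw [← h2, hc2, embQ_zero, smul_zero]
    rw [Submodule.mem_bot]
    apply Subtype.ext
    exact Prod.ext hw1 hw2
  have hπ₂inj : Function.Injective π₂ := by
    rw [← LinearMap.ker_eq_bot]
    rw [eq_bot_iff]
    intro w hw
    have hw2 : (w : (Fin n → ℚ) × (Fin n → ℚ)).2 = 0 := hw
    obtain ⟨N, hN, c, ⟨hcV, hcφ⟩, h1, h2⟩ := keyW (w : (Fin n → ℚ) × (Fin n → ℚ)) w.2
    have hc2 : c.2 = 0 := by
      apply embQ_injective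
      rw [h2, hw2, smul_zero, embQ_zero]
    have hc1 : c.1 = 0 := by
      have hφ0 : φ ⟨c.1, hcV⟩ = 0 := by
        apply Subtype.ext
        rw [hcφ, hc2]
        rfl
      have : (⟨c.1, hcV⟩ : V) = 0 := by
        apply φ.injective
        rw [hφ0, map_zero]
      exact congrArg Subtype.val this
    have hw1 : (w : (Fin n → ℚ) × (Fin n → ℚ)).1 = 0 := by
      apply zsmul_injQ hN
      show N • _ = N • _
      rw [← h1, hc1, embQ_zero, smul_zero]
    rw [Submodule.mem_bot]
    apply Subtype.ext
    exact Prod.ext hw1 hw2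
  set equivE : E ≃ₗ[ℚ] D :=
    (LinearEquiv.ofInjective π₁ hπ₁inj).trans (LinearEquiv.ofEq _ _ hπ₁r) with hequivEdef
  set equivE' : E ≃ₗ[ℚ] D' :=
    (LinearEquiv.ofInjective π₂ hπ₂inj).trans (LinearEquiv.ofEq _ _ hπ₂r) with hequivE'def
  have hequivE : ∀ w : E, ((equivE w : D) : Fin n → ℚ) = (w : (Fin n → ℚ) × (Fin n → ℚ)).1 := by
    intro w
    simp [hequivEdef, hπ₁]
  have hequivE' : ∀ w : E, ((equivE' w : D') : Fin n → ℚ) = (w : (Fin n → ℚ) × (Fin n → ℚ)).2 := by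
    intro w
    simp [hequivE'def, hπ₂]
  have hD'le : D' ≤ D := by
    rw [hD', hD]
    apply Submodule.span_mono
    rintro _ ⟨k, rfl⟩
    exact ⟨k + 1, rfl⟩
  have hD'D : D' = D := by
    apply Submodule.eq_of_le_of_finrank_le hD'le
    rw [← equivE.finrank_eq, ← equivE'.finrank_eq]
  set eqD : D' ≃ₗ[ℚ] D := LinearEquiv.ofEq _ _ hD'D with heqDdef
  set e : D ≃ₗ[ℚ] D := equivE.symm.trans (equivE'.trans eqD) with hedef
  have hkey : ∀ z : D, ∃ w : E, (w : (Fin n → ℚ) × (Fin n → ℚ)).1 = (z : Fin n → ℚ) ∧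
      (w : (Fin n → ℚ) × (Fin n → ℚ)).2 = ((e z : D) : Fin n → ℚ) := by
    intro z
    refine ⟨equivE.symm z, ?_, ?_⟩
    · rw [← hequivE (equivE.symm z), equivE.apply_symm_apply]
    · have h1 : e z = eqD (equivE' (equivE.symm z)) := by
        rw [hedef]
        rfl
      rw [h1, ← hequivE' (equivE.symm z), heqDdef]
      rw [LinearEquiv.coe_ofEq_apply]
  have hrelAll : ∀ z : D, RelQ V W φ (z : Fin n → ℚ) ((e z : D) : Fin n → ℚ) := by
    intro z
    obtain ⟨w, hw1, hw2⟩ := hkey z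
    obtain ⟨N, hN, c, ⟨hcV, hcφ⟩, h1, h2⟩ := keyW (w : (Fin n → ℚ) × (Fin n → ℚ)) w.2
    refine ⟨N, hN, ⟨c.1, hcV⟩, ?_, ?_⟩
    · rw [← hw1, ← h1]
    · rw [← hw2, ← h2, hcφ]
  -- D is contained in the span of V ⊓ W
  have hDq : D ≤ qSpan n (V ⊓ W) := by
    rw [← hD'D, hD', Submodule.span_le]
    rintro _ ⟨k, rfl⟩
    apply Submodule.subset_span
    exact ⟨v (k + 1), ⟨hvV (k + 1), hvW k⟩, rfl⟩
  have hsubset : (D : Set (Fin n → ℚ)) ⊆ DSet V W φ := by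
    intro ζ hζ
    refine ⟨fun k => (((fun z : D => e.symm z)^[k]) ⟨ζ, hζ⟩ : D), rfl, ?_, ?_⟩
    · intro k
      exact hDq ((((fun z : D => e.symm z)^[k]) ⟨ζ, hζ⟩ : D)).2
    · intro k
      have hrel2 := hrelAll (e.symm (((fun z : D => e.symm z)^[k]) ⟨ζ, hζ⟩))
      rw [e.apply_symm_apply] at hrel2
      show RelQ V W φ (((((fun z : D => e.symm z)^[k + 1]) ⟨ζ, hζ⟩ : D)) : Fin n → ℚ) _
      rw [Function.iterate_succ_apply' (fun z : D => e.symm z) k ⟨ζ, hζ⟩]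
      exact hrel2
  -- x lands in D
  have hxD : embQ n x ∈ D := by
    have hy0 : y 0 ∈ D := Submodule.subset_span ⟨0, rfl⟩
    have hy0x : y 0 = (p : ℚ) • embQ n x := by
      rw [hydef]
      show embQ n (v 0) = _
      rw [hv0, embQ_smul, Int.cast_smul_eq_zsmul]
    have hpQ : (p : ℚ) ≠ 0 := by exact_mod_cast hppos.ne'
    have : embQ n x = (p : ℚ)⁻¹ • y 0 := by
      rw [hy0x, inv_smul_smul₀ hpQ]
    rw [this]
    exact D.smul_mem _ hy0
  -- the lattice inside D and integrality of e
  set f : Module.End ℚ D := e.toLinearMap with hfdef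
  have hyD : ∀ k, y k ∈ D := fun k => Submodule.subset_span ⟨k, rfl⟩
  set gD : ℕ → D := fun k => ⟨y k, hyD k⟩ with hgDdef
  have hYmem : ∀ k, Y k ∈ E := fun k => Submodule.subset_span ⟨k, rfl⟩
  have hgDe : ∀ k, e (gD k) = gD (k + 1) := by
    intro k
    have h1 : equivE ⟨Y k, hYmem k⟩ = gD k := Subtype.ext (hequivE ⟨Y k, hYmem k⟩)
    have h2 : e (gD k) = eqD (equivE' ⟨Y k, hYmem k⟩) := by
      rw [← h1, hedef]
      simp only [LinearEquiv.trans_apply, LinearEquiv.symm_apply_apply]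
    apply Subtype.ext
    rw [h2, heqDdef, LinearEquiv.coe_ofEq_apply, hequivE' ⟨Y k, hYmem k⟩]
  set ΛD : Submodule ℤ D := Submodule.span ℤ (Set.range gD) with hΛD
  have hstab : ∀ w : D, w ∈ ΛD → f w ∈ ΛD := by
    intro w hw
    induction hw using Submodule.span_induction with
    | mem z hz =>
      obtain ⟨k, rfl⟩ := hz
      have : f (gD k) = gD (k + 1) := hgDe k
      rw [this]
      exact Submodule.subset_span ⟨k + 1, rfl⟩
    | zero => rw [map_zero]; exact Submodule.zero_mem _
    | add a b _ _ ha hb => rw [map_add]; exact Submodule.add_mem _ ha hb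
    | smul m a _ ha => rw [map_zsmul]; exact Submodule.smul_mem _ _ ha
  -- ΛD is finitely generated
  set Λ₀ : Submodule ℤ (Fin n → ℚ) := Submodule.span ℤ (Set.range y) with hΛ₀
  have hmapΛ : Submodule.map ((D.subtype).restrictScalars ℤ) ΛD = Λ₀ := by
    rw [hΛD, Submodule.map_span, ← Set.range_comp]
    rfl
  have hΛ₀le : Λ₀ ≤ LinearMap.range (embL n) := by
    rw [hΛ₀, Submodule.span_le]
    rintro _ ⟨k, rfl⟩
    exact ⟨v k, rfl⟩
  haveI : IsNoetherian ℤ (Fin n → ℤ) := inferInstance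
  have hΛ₀fg : Λ₀.FG := by
    have h1 : Submodule.map (embL n) (Submodule.comap (embL n) Λ₀) = Λ₀ := by
      rw [Submodule.map_comap_eq, inf_eq_right.mpr hΛ₀le]
    rw [← h1]
    exact (IsNoetherian.noetherian _).map _
  have hΛDfg : ΛD.FG := by
    apply Submodule.fg_of_fg_map_injective ((D.subtype).restrictScalars ℤ)
      (Submodule.injective_subtype D)
    rw [hmapΛ]
    exact hΛ₀fg
  haveI : Module.Finite ℤ ΛD := Module.Finite.iff_fg.mpr hΛDfg
  set r : ΛD →ₗ[ℤ] ΛD := (f.restrictScalars ℤ).restrict hstab with hrdef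
  have hrint : IsIntegral ℤ r := IsIntegral.of_finite ℤ r
  obtain ⟨Q, hQm, hQ0⟩ := hrint
  have hQ0' : Polynomial.aeval r Q = 0 := by rwa [Polynomial.aeval_def]
  have hpow : ∀ (k : ℕ) (w : ΛD), (((r ^ k) w : D) : Fin n → ℚ) =
      (((f ^ k) (w : D) : D) : Fin n → ℚ) := by
    intro k
    induction k with
    | zero => intro w; simp
    | succ k ih =>
      intro w
      rw [pow_succ, Module.End.mul_apply, ih (r w)]
      have hrw : ((r w : D) : Fin n → ℚ) = ((f (w : D) : D) : Fin n → ℚ) := by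
        rw [hrdef]
        rfl
      have : (r w : D) = f (w : D) := Subtype.ext hrw
      rw [this, pow_succ, Module.End.mul_apply]
  have hspanD : Submodule.span ℚ (Set.range gD) = ⊤ := by
    apply Submodule.map_injective_of_injective (Submodule.injective_subtype D)
    rw [Submodule.map_span, Submodule.map_subtype_top, ← Set.range_comp]
    rfl
  have hQf : Polynomial.aeval f Q = 0 := by
    apply LinearMap.ext
    intro z
    rw [LinearMap.zero_apply]
    have hz : z ∈ Submodule.span ℚ (Set.range gD) := hspanD ▸ Submodule.mem_top
    induction hz using Submodule.span_induction with
    | mem zz hzz =>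
      obtain ⟨k, rfl⟩ := hzz
      set gΛ : ΛD := ⟨gD k, Submodule.subset_span ⟨k, rfl⟩⟩ with hgΛ
      have h3 : (Polynomial.aeval r Q) gΛ =
          ∑ i ∈ Finset.range (Q.natDegree + 1), Q.coeff i • (r ^ i) gΛ := by
        have := congrArg (fun T : Module.End ℤ ΛD => T gΛ)
          (Polynomial.aeval_eq_sum_range (p := Q) r)
        simpa [LinearMap.sum_apply, LinearMap.smul_apply] using this
      have h2 : ((∑ i ∈ Finset.range (Q.natDegree + 1), Q.coeff i • (r ^ i) gΛ : ΛD) : D) =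
          ∑ i ∈ Finset.range (Q.natDegree + 1), Q.coeff i • ((f ^ i) (gD k)) := by
        rw [show ((∑ i ∈ Finset.range (Q.natDegree + 1), Q.coeff i • (r ^ i) gΛ : ΛD) : D)
            = ΛD.subtype (∑ i ∈ Finset.range (Q.natDegree + 1), Q.coeff i • (r ^ i) gΛ) from rfl,
          map_sum]
        refine Finset.sum_congr rfl fun i _ => ?_
        rw [map_smul]
        congr 1
        exact Subtype.ext (hpow i gΛ)
      have h4 := congrArg (fun T : Module.End ℚ D => T (gD k))
        (Polynomial.aeval_eq_sum_range (p := Q) f)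
      simp only [LinearMap.sum_apply, LinearMap.smul_apply] at h4
      rw [h4, ← h2, ← h3, hQ0']
      simp
    | zero => simp
    | add a b _ _ ha hb => rw [map_add, ha, hb, add_zero]
    | smul m a _ ha => rw [map_smul, ha, smul_zero]
  have hIntf : IsIntegral ℤ f := ⟨Q, hQm, by rwa [← Polynomial.aeval_def]⟩
  have hIntQf : IsIntegral ℚ f := hIntf.tower_top
  have hμm : (minpoly ℚ f).Monic := minpoly.monic hIntQf
  have hdvdμ : minpoly ℚ f ∣ Q.map (algebraMap ℤ ℚ) := by
    apply minpoly.dvd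
    rw [Polynomial.aeval_map_algebraMap]
    exact hQf
  obtain ⟨P, hPmap⟩ := IsIntegrallyClosed.eq_map_mul_C_of_dvd (K := ℚ) hQm hdvdμ
  rw [hμm.leadingCoeff, Polynomial.C_1, mul_one] at hPmap
  have hPmonic : P.Monic := by
    apply Polynomial.monic_of_injective (f := algebraMap ℤ ℚ)
      (fun a b hab => by exact_mod_cast hab)
    rw [hPmap]
    exact hμm
  exact ⟨D, e, hsubset, hxD, hrelAll, P, hPmonic,
    by rw [show Int.castRingHom ℚ = algebraMap ℤ ℚ from rfl, hPmap]⟩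


/-- The backward direction. -/
lemma backward (V W : AddSubgroup (Fin n → ℤ)) (φ : V ≃+ W) (x : Fin n → ℤ)
    (D : Submodule ℚ (Fin n → ℚ)) (e : D ≃ₗ[ℚ] D)
    (hsub : (D : Set (Fin n → ℚ)) ⊆ DSet V W φ) (hx : embQ n x ∈ D)
    (hrel : ∀ z : D, RelQ V W φ (z : Fin n → ℚ) ((e z : D) : Fin n → ℚ))
    (P : Polynomial ℤ) (hP : P.Monic)
    (hPm : P.map (Int.castRingHom ℚ) = minpoly ℚ (e.toLinearMap : Module.End ℚ D)) :
    ∃ p : ℤ, 0 < p ∧ ∀ k : ℕ, ∃ w, IntRelIter V W φ k (p • x) w := by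
  classical
  set f : Module.End ℚ D := e.toLinearMap with hf
  -- `P` annihilates `f`
  have hfP : Polynomial.aeval f P = 0 := by
    have h1 : Polynomial.aeval f (P.map (Int.castRingHom ℚ)) = 0 := by
      rw [hPm]; exact minpoly.aeval ℚ f
    rwa [show (Int.castRingHom ℚ) = algebraMap ℤ ℚ from rfl,
      Polynomial.aeval_map_algebraMap] at h1
  set d := P.natDegree with hd
  set z₀ : D := ⟨embQ n x, hx⟩ with hz₀
  set g : ℕ → D := fun j => (f ^ j) z₀ with hg
  set ΛD : Submodule ℤ D := Submodule.span ℤ (Set.range fun j : Fin d => g j) with hΛD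
  -- the linear recurrence
  have hsum : ∑ i ∈ Finset.range (d + 1), P.coeff i • f ^ i = 0 := by
    rw [← Polynomial.aeval_eq_sum_range]; exact hfP
  have happ : ∀ k, ∑ i ∈ Finset.range (d + 1), P.coeff i • g (i + k) = 0 := by
    intro k
    have := congrArg (fun T : Module.End ℚ D => T (g k)) hsum
    simp only [LinearMap.sum_apply, LinearMap.smul_apply, LinearMap.zero_apply] at this
    rw [← this]
    refine Finset.sum_congr rfl fun i _ => ?_
    congr 1
    simp only [hg, ← Module.End.mul_apply, ← pow_add]
  have hrec : ∀ k, g (d + k) = ∑ i ∈ Finset.range d, (-(P.coeff i)) • g (i + k) := by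
    intro k
    have h1 := happ k
    rw [Finset.sum_range_succ] at h1
    have h2 : P.coeff d = 1 := hP.coeff_natDegree
    rw [h2, one_smul] at h1
    have := eq_neg_of_add_eq_zero_right h1
    rw [this, ← Finset.sum_neg_distrib]
    exact Finset.sum_congr rfl fun i _ => (neg_smul _ _).symm
  have hgmem : ∀ m, g m ∈ ΛD := by
    intro m
    induction m using Nat.strong_induction_on with
    | _ m ih =>
      by_cases hm : m < d
      · exact Submodule.subset_span ⟨⟨m, hm⟩, rfl⟩
      · push_neg at hm
        obtain ⟨k, rfl⟩ : ∃ k, m = d + k := ⟨m - d, (Nat.add_sub_cancel' hm).symm⟩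
        rw [hrec k]
        refine Submodule.sum_mem _ fun i hi => Submodule.smul_mem _ _ (ih (i + k) ?_)
        have : i < d := Finset.mem_range.mp hi
        omega
  have hstab : ∀ w : D, w ∈ ΛD → f w ∈ ΛD := by
    intro w hw
    induction hw using Submodule.span_induction with
    | mem z hz =>
      obtain ⟨j, rfl⟩ := hz
      have : f (g j) = g ((j : ℕ) + 1) := by
        simp only [hg, ← Module.End.mul_apply, ← pow_succ']
      rw [this]
      exact hgmem _
    | zero => rw [map_zero]; exact Submodule.zero_mem _
    | add a b _ _ ha hb => rw [map_add]; exact Submodule.add_mem _ ha hb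
    | smul m a _ ha => rw [map_zsmul]; exact Submodule.smul_mem _ _ ha
  -- clearing denominators for the generators
  have hNs : ∀ j : Fin d, ∃ N : ℤ, N ≠ 0 ∧ ∃ u ∈ V ⊓ W,
      embQ n u = N • ((g j : D) : Fin n → ℚ) := by
    intro j
    have h1 : ((g j : D) : Fin n → ℚ) ∈ DSet V W φ := hsub (g j).2
    obtain ⟨xs, hxs0, hxsq, -⟩ := h1
    have : ((g j : D) : Fin n → ℚ) ∈ qSpan n (V ⊓ W) := hxs0 ▸ hxsq 0
    exact mem_qSpan_clear this
  choose N hNne u hu hequ using hNs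
  set p : ℤ := |∏ j : Fin d, N j| with hp
  have hprodne : (∏ j : Fin d, N j) ≠ 0 := Finset.prod_ne_zero_iff.mpr fun j _ => hNne j
  have hppos : 0 < p := abs_pos.mpr hprodne
  have hpne : p ≠ 0 := hppos.ne'
  set GVW : Submodule ℤ (Fin n → ℚ) :=
    Submodule.map (embL n) (AddSubgroup.toIntSubmodule (V ⊓ W)) with hGVW
  have hdvd : ∀ j : Fin d, N j ∣ p := fun j =>
    (dvd_abs _ _).mpr (Finset.dvd_prod_of_mem N (Finset.mem_univ j))
  have hgen : ∀ j : Fin d, N j • ((g j : D) : Fin n → ℚ) ∈ GVW := by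
    intro j
    exact ⟨u j, hu j, hequ j⟩
  have hclear : ∀ w : D, w ∈ ΛD → p • ((w : D) : Fin n → ℚ) ∈ GVW := by
    intro w hw
    induction hw using Submodule.span_induction with
    | mem z hz =>
      obtain ⟨j, rfl⟩ := hz
      obtain ⟨c, hc⟩ := hdvd j
      rw [hc, mul_comm, mul_smul]
      exact Submodule.smul_mem _ _ (hgen j)
    | zero => simp only [Submodule.coe_zero, smul_zero]; exact Submodule.zero_mem GVW
    | add a b _ _ ha hb =>
      rw [Submodule.coe_add, smul_add]
      exact Submodule.add_mem _ ha hb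
    | smul m a _ ha =>
      have : ((m • a : D) : Fin n → ℚ) = m • ((a : D) : Fin n → ℚ) := rfl
      rw [this, smul_comm]
      exact Submodule.smul_mem _ _ ha
  -- membership in GVW gives integer points
  have hGVWmem : ∀ z : Fin n → ℚ, z ∈ GVW → ∃ c : Fin n → ℤ, c ∈ V ⊓ W ∧ embQ n c = z := by
    intro z hz
    obtain ⟨c, hc, hcz⟩ := hz
    exact ⟨c, hc, hcz⟩
  -- the main induction
  have MAIN : ∀ k : ℕ, ∀ w : D, w ∈ ΛD → ∀ a : Fin n → ℤ,
      embQ n a = p • ((w : D) : Fin n → ℚ) → ∃ b, IntRelIter V W φ k a b := by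
    intro k
    induction k with
    | zero => exact fun w _ a _ => ⟨a, rfl⟩
    | succ k ih =>
      intro w hw a ha
      have hfw : f w ∈ ΛD := hstab w hw
      obtain ⟨c, hcVW, hc⟩ := hGVWmem _ (hclear w hw)
      have hac : a = c := embQ_injective (by rw [ha, hc])
      have haV : a ∈ V := by
        rw [hac]; exact hcVW.1
      obtain ⟨c', hc'VW, hc'⟩ := hGVWmem _ (hclear (f w) hfw)
      obtain ⟨q, hq, v, hv1, hv2⟩ := hrel w
      -- q • a = p • v
      have h2 : q • a = p • (v : Fin n → ℤ) := by
        apply embQ_injective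
        rw [embQ_smul, embQ_smul, ha, hv1, smul_comm]
      have h3 : q • (⟨a, haV⟩ : V) = p • v := by
        apply Subtype.ext
        simpa using h2
      have h4W : q • (φ ⟨a, haV⟩) = p • (φ v) := by
        have h := congrArg (φ.toAddMonoidHom) h3
        rw [map_zsmul, map_zsmul] at h
        simpa using h
      have h4 : q • ((φ ⟨a, haV⟩ : W) : Fin n → ℤ) = p • ((φ v : W) : Fin n → ℤ) := by
        have h := congrArg (W.subtype) h4W
        rw [map_zsmul, map_zsmul] at h
        exact h
      have h5 : embQ n ((φ ⟨a, haV⟩ : W) : Fin n → ℤ) = embQ n c' := by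
        apply zsmul_injQ hq
        show q • _ = q • _
        rw [← embQ_smul, h4, embQ_smul, hv2, hc', smul_comm]
        congr 1
      have h6 : ((φ ⟨a, haV⟩ : W) : Fin n → ℤ) = c' := embQ_injective h5
      obtain ⟨b, hb⟩ := ih (f w) hfw c' (by rw [hc'])
      exact ⟨b, c', ⟨haV, h6⟩, hb⟩
  refine ⟨p, hppos, fun k => ?_⟩
  have hz₀mem : z₀ ∈ ΛD := by
    have : g 0 = z₀ := by simp [hg]
    rw [← this]; exact hgmem 0
  exact MAIN k z₀ hz₀mem (p • x) (by rw [embQ_smul])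

end Prop71Aux

/-- Proposition 7.1(5): for `x ∈ M`, there is a positive integer `p` such that every
forward iterate `φ^k` is defined at `p • x` (i.e. `p • x ∈ V_k` for all `k`) if and only
if there is a `ℚ`-subspace `D_x ⊆ D_φ` containing the image of `x`, invariant under `φ̃`
(with `φ̃ (D_x) = D_x`), such that the minimal polynomial of the restriction of `φ̃` to
`D_x` is a monic polynomial with integer coefficients. -/

theorem statement5 (n : ℕ) (V W : AddSubgroup (Fin n → ℤ)) (φ : V ≃+ W)
    (x : Fin n → ℤ) :
    (∃ p : ℤ, 0 < p ∧ ∀ k : ℕ, ∃ w, IntRelIter V W φ k (p • x) w) ↔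
      (∃ (D : Submodule ℚ (Fin n → ℚ)) (e : D ≃ₗ[ℚ] D),
        (D : Set (Fin n → ℚ)) ⊆ DSet V W φ ∧ embQ n x ∈ D ∧
        (∀ z : D, RelQ V W φ (z : Fin n → ℚ) ((e z : D) : Fin n → ℚ)) ∧
        ∃ P : Polynomial ℤ, P.Monic ∧
          P.map (Int.castRingHom ℚ) = minpoly ℚ (e.toLinearMap : Module.End ℚ D)) := by
  constructor
  · rintro ⟨p, hp, h⟩
    exact Prop71Aux.forward V W φ x p hp h
  · rintro ⟨D, e, hsub, hx, hrel, P, hP, hPm⟩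
    exact Prop71Aux.backward V W φ x D e hsub hx hrel P hP hPm
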